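/- The determinant of the N³×N³ permutation-type matrix P with entries ⟨i₁,i₂,i₃|P|j₁,j₂,j₃⟩ = δ_{i₂+i₃, j₂+j₃} δ_{i₁,-j₂} δ_{j₁,-i₂} Φ(j₃)/Φ(i₃) (indices in ℤ/N) equals (-1)^{N²(N-1)/2}. -/
import Mathlib


open Matrix

/-- The `N³×N³` monomial matrix `P` with entries
`⟨i₁,i₂,i₃|P|j₁,j₂,j₃⟩ = δ_{i₂+i₃,j₂+j₃} δ_{i₁,-j₂} δ_{j₁,-i₂} Φ(j₃)/Φ(i₃)`
(indices in `ℤ/N`, `Φ(n) = (-1)^n e^{πin²/N}`) has determinant `(-1)^{N²(N-1)/2}`. -/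
theorem det_P (N : ℕ) [NeZero N] (hN : 2 ≤ N) :
    Matrix.det (Matrix.of (fun (i j : ZMod N × ZMod N × ZMod N) =>
      if i.2.1 + i.2.2 = j.2.1 + j.2.2 ∧ i.1 = -j.2.1 ∧ j.1 = -i.2.1 then
        ((-1 : ℂ) ^ (j.2.2.val) * Complex.exp (Real.pi * Complex.I * (j.2.2.val : ℂ) ^ 2 / N))
          / ((-1 : ℂ) ^ (i.2.2.val) * Complex.exp (Real.pi * Complex.I * (i.2.2.val : ℂ) ^ 2 / N))
      else 0))
    = (-1 : ℂ) ^ (N ^ 2 * (N - 1) / 2) := by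
  classical
  set X := ZMod N × ZMod N × ZMod N
  set f : X → X := fun i => (-i.2.1, -i.1, i.1 + i.2.1 + i.2.2) with hf
  have hff : ∀ i, f (f i) = i := by
    rintro ⟨a, b, c⟩
    simp only [hf]
    refine Prod.ext (by simp) (Prod.ext (by simp) ?_)
    simp only
    ring
  set σ : Equiv.Perm X := ⟨f, f, hff, hff⟩ with hσ
  set d : X → ℂ := fun i =>
    (-1 : ℂ) ^ (i.2.2.val) * Complex.exp (Real.pi * Complex.I * (i.2.2.val : ℂ) ^ 2 / N) with hd
  have hd0 : ∀ i, d i ≠ 0 := fun i =>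
    mul_ne_zero (pow_ne_zero _ (by norm_num)) (Complex.exp_ne_zero _)
  have hmat : (Matrix.of (fun (i j : X) =>
      if i.2.1 + i.2.2 = j.2.1 + j.2.2 ∧ i.1 = -j.2.1 ∧ j.1 = -i.2.1 then
        ((-1 : ℂ) ^ (j.2.2.val) * Complex.exp (Real.pi * Complex.I * (j.2.2.val : ℂ) ^ 2 / N))
          / ((-1 : ℂ) ^ (i.2.2.val) * Complex.exp (Real.pi * Complex.I * (i.2.2.val : ℂ) ^ 2 / N))
      else 0))
      = Matrix.diagonal (fun i => (d i)⁻¹) * (σ.permMatrix ℂ * Matrix.diagonal d) := by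
    ext i j
    rw [Matrix.diagonal_mul, Matrix.mul_diagonal]
    obtain ⟨a, b, c⟩ := i
    obtain ⟨x, y, z⟩ := j
    have hcond : (b + c = y + z ∧ a = -y ∧ x = -b) ↔ σ (a, b, c) = (x, y, z) := by
      constructor
      · rintro ⟨h1, h2, h3⟩
        show ((-b, -a, a + b + c) : X) = (x, y, z)
        simp only [Prod.mk.injEq]
        exact ⟨by linear_combination -h3, by linear_combination -h2, by linear_combination h1 + h2⟩
      · intro h
        have h' : ((-b, -a, a + b + c) : X) = (x, y, z) := h
        simp only [Prod.mk.injEq] at h'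
        obtain ⟨h1, h2, h3⟩ := h'
        exact ⟨by linear_combination h3 + h2, by linear_combination -h2, by linear_combination -h1⟩
    simp only [Matrix.of_apply, Equiv.Perm.permMatrix, PEquiv.toMatrix_apply,
      Equiv.toPEquiv_apply, Option.mem_def, Option.some.injEq]
    rw [if_congr hcond rfl rfl]
    by_cases h : σ (a, b, c) = (x, y, z)
    · rw [if_pos h, if_pos h]
      show d (x, y, z) / d (a, b, c) = (d (a, b, c))⁻¹ * (1 * d (x, y, z))
      rw [div_eq_mul_inv]; ring
    · rw [if_neg h, if_neg h]
      simp
  rw [hmat, Matrix.det_mul, Matrix.det_mul, Matrix.det_diagonal, Matrix.det_diagonal,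
    Matrix.det_permutation]
  have hprod : (∏ i : X, (d i)⁻¹) * (((Equiv.Perm.sign σ : ℤ) : ℂ) * ∏ i : X, d i)
      = ((Equiv.Perm.sign σ : ℤ) : ℂ) := by
    rw [mul_comm (((Equiv.Perm.sign σ : ℤ) : ℂ)) _, ← mul_assoc, ← Finset.prod_mul_distrib]
    simp only [inv_mul_cancel₀ (hd0 _)]
    simp
  rw [hprod]
  -- now compute the sign of the involution σ
  have hσ2 : σ ^ 2 = 1 := by
    rw [pow_two]
    exact Equiv.Perm.ext hff
  have hctwo : ∀ n ∈ σ.cycleType, n = 2 := by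
    intro n hn
    have h1 : n ∣ orderOf σ := Equiv.Perm.dvd_of_mem_cycleType hn
    have h2 : orderOf σ ∣ 2 := orderOf_dvd_of_pow_eq_one hσ2
    have h3 : 2 ≤ n := Equiv.Perm.two_le_of_mem_cycleType hn
    exact Nat.le_antisymm (Nat.le_of_dvd two_pos (h1.trans h2)) h3
  set k := Multiset.card σ.cycleType with hk
  have hsum : σ.cycleType.sum = 2 * k := by
    rw [Multiset.eq_replicate_card.2 hctwo, Multiset.sum_replicate, smul_eq_mul, mul_comm]
  have hsign : Equiv.Perm.sign σ = (-1 : ℤˣ) ^ k := by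
    rw [Equiv.Perm.sign_of_cycleType, hsum, ← hk]
    rw [show 2 * k + k = 2 * k + k from rfl, pow_add, pow_mul]
    simp
  -- support cardinality
  have hsupp : σ.support.card = N ^ 3 - N ^ 2 := by
    have hcardX : Fintype.card X = N ^ 3 := by
      simp [X, ZMod.card]; ring
    have hfix : (Finset.univ.filter fun i : X => σ i = i).card = N ^ 2 := by
      rw [← Fintype.card_subtype]
      have e : {i : X // σ i = i} ≃ ZMod N × ZMod N := {
        toFun := fun p => p.1.2
        invFun := fun q => ⟨(-q.1, q.1, q.2), by
          show ((-q.1, -(-q.1), -q.1 + q.1 + q.2) : X) = (-q.1, q.1, q.2)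
          simp⟩
        left_inv := by
          rintro ⟨⟨a, b, c⟩, hp⟩
          have h' : ((-b, -a, a + b + c) : X) = (a, b, c) := hp
          simp only [Prod.mk.injEq] at h'
          exact Subtype.ext (by
            show ((-b, b, c) : X) = (a, b, c)
            rw [← h'.1])
        right_inv := fun q => rfl }
      rw [Fintype.card_congr e]
      simp [ZMod.card]; ring
    have := Finset.card_filter_add_card_filter_not (s := (Finset.univ : Finset X))
      (p := fun i : X => σ i = i)
    rw [Finset.card_univ, hcardX, hfix] at this
    have hs : σ.support = Finset.univ.filter fun i : X => ¬ σ i = i := by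
      ext i; simp [Equiv.Perm.mem_support]
    rw [hs]
    omega
  have hk2 : 2 * k = N ^ 3 - N ^ 2 := by
    rw [← hsum, Equiv.Perm.sum_cycleType, hsupp]
  have hke : k = N ^ 2 * (N - 1) / 2 := by
    have h1 : N ^ 2 * (N - 1) = N ^ 3 - N ^ 2 := by
      have h2 : N ^ 3 = N ^ 2 * N := by ring
      rw [← Nat.pred_eq_sub_one, Nat.mul_pred, h2]
    omega
  rw [hsign, hke]
  push_cast
  simp
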